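/- arXiv:2112.11971 — 7 statements merged into one kernel-verified Lean document; each statement's English description precedes it below -/
import Mathlib

section
/- Let ρ be a probability measure on a measurable space X, let η be a Markov kernel from X to a measurable space Y, let κ : X → PMF(ℕ) be measurable, and let μ : X → ℝ and a : X → ℝ be measurable with, for ρ-a.e. x, 0 < μ(x) and Σ'_{m} m·κ(x)(m) = μ(x). Let h : X × Y → ℝ be bounded measurable and suppose a is bounded. Then ∫_X [ Σ'_{m∈ℕ} κ(x)(m) · ∫_{(Fin m → Y)} ( a(x) + μ(x)^{−1} Σ_{i∈Fin m} ( h(x, y_i) − a(x) ) ) d(⊗_{i∈Fin m} η(x))(y) ] dρ(x) = ∫_X ∫_Y h(x, y) dη(x)(y) dρ(x). -/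
open MeasureTheory ProbabilityTheory

lemma pi_map_eval {ι : Type*} [Fintype ι] [DecidableEq ι] {Y : ι → Type*}
    [∀ i, MeasurableSpace (Y i)]
    (μ : ∀ i, Measure (Y i)) [∀ i, IsProbabilityMeasure (μ i)] (i : ι) :
    (Measure.pi μ).map (Function.eval i) = μ i := by
  ext s hs
  rw [Measure.map_apply (measurable_pi_apply i) hs, Set.eval_preimage, Measure.pi_pi]
  rw [Finset.prod_eq_single i (fun j _ hj => by simp [Function.update_of_ne hj])
    (by simp)]
  simp

/-- Accuracy of multifidelity inference (Proposition 1): the multifidelity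
likelihood-free weighting `ω_mf = a(x) + μ(x)⁻¹ ∑_{i<m} (h(x, yᵢ) - a(x))`,
where the number `m` of coupled high-fidelity simulations is drawn from
`κ(x)` with mean `μ(x) > 0` and each `yᵢ` is drawn from `η(x)`, has the same
expectation as the high-fidelity weighting `h`. -/
theorem multifidelity_weighting_unbiased
    {X Y : Type*} [MeasurableSpace X] [MeasurableSpace Y]
    (ρ : Measure X) [IsProbabilityMeasure ρ]
    (η : Kernel X Y) [IsMarkovKernel η]
    (κ : X → PMF ℕ) (hκ : ∀ m : ℕ, Measurable fun x => κ x m)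
    (μ a : X → ℝ) (hμ : Measurable μ) (ha : Measurable a)
    (hae : ∀ᵐ x ∂ρ, 0 < μ x ∧ ∑' m : ℕ, (m : ℝ) * ((κ x) m).toReal = μ x)
    (h : X × Y → ℝ) (hhm : Measurable h)
    (Dh : ℝ) (hhb : ∀ p, |h p| ≤ Dh)
    (Da : ℝ) (hab : ∀ x, |a x| ≤ Da) :
    ∫ x, (∑' m : ℕ, ((κ x) m).toReal *
        ∫ y : Fin m → Y,
          (a x + (μ x)⁻¹ * ∑ i : Fin m, (h (x, y i) - a x))
          ∂(Measure.pi fun _ : Fin m => η x)) ∂ρ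
      = ∫ x, ∫ y, h (x, y) ∂(η x) ∂ρ := by
  refine integral_congr_ae ?_
  filter_upwards [hae] with x hx
  obtain ⟨hμpos, hsum⟩ := hx
  set I : ℝ := ∫ y, h (x, y) ∂(η x) with hI
  -- Step A: inner integral
  have hA : ∀ m : ℕ,
      (∫ y : Fin m → Y, (a x + (μ x)⁻¹ * ∑ i : Fin m, (h (x, y i) - a x))
        ∂(Measure.pi fun _ : Fin m => η x))
      = a x + (μ x)⁻¹ * ((m : ℝ) * (I - a x)) := by
    intro m
    set π : Measure (Fin m → Y) := Measure.pi fun _ : Fin m => η x with hπ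
    haveI : IsProbabilityMeasure π := by rw [hπ]; infer_instance
    have hmeas : ∀ i : Fin m, Measurable (fun y : Fin m → Y => h (x, y i)) := fun i =>
      hhm.comp (measurable_const.prodMk (measurable_pi_apply i))
    have hint : ∀ i : Fin m, Integrable (fun y : Fin m → Y => h (x, y i)) π := fun i =>
      ⟨(hmeas i).aestronglyMeasurable,
        HasFiniteIntegral.of_bounded (C := Dh)
          (Filter.Eventually.of_forall fun y => by
            simpa [Real.norm_eq_abs] using hhb (x, y i))⟩
    have heval : ∀ i : Fin m, ∫ y : Fin m → Y, h (x, y i) ∂π = I := by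
      intro i
      rw [hI, ← pi_map_eval (fun _ : Fin m => η x) i,
        integral_map (measurable_pi_apply i).aemeasurable
          ((hhm.comp (measurable_const.prodMk measurable_id)).aestronglyMeasurable)]
    have hintsub : ∀ i : Fin m, Integrable (fun y : Fin m → Y => h (x, y i) - a x) π :=
      fun i => (hint i).sub (integrable_const _)
    have hintsum : Integrable (fun y : Fin m → Y => ∑ i : Fin m, (h (x, y i) - a x)) π :=
      integrable_finset_sum _ (fun i _ => hintsub i)
    rw [integral_add (integrable_const _) (hintsum.const_mul _),
      integral_const, integral_const_mul,
      integral_finset_sum _ (fun i _ => hintsub i)]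
    have hsub : ∀ i ∈ Finset.univ, (∫ y : Fin m → Y, (h (x, y i) - a x) ∂π) = I - a x := by
      intro i _
      rw [integral_sub (hint i) (integrable_const _), heval i, integral_const]
      simp
    rw [Finset.sum_congr rfl hsub]
    simp [mul_comm]
    left; ring
  -- Step B: tsum
  have hμne : μ x ≠ 0 := ne_of_gt hμpos
  set p : ℕ → ℝ := fun m => ((κ x) m).toReal with hp
  have hpsum : Summable p :=
    ENNReal.summable_toReal (by rw [(κ x).tsum_coe]; exact ENNReal.one_ne_top)
  have hp1 : ∑' m, p m = 1 := by
    rw [hp, ← ENNReal.tsum_toReal_eq (fun m => (κ x).apply_ne_top m), (κ x).tsum_coe,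
      ENNReal.toReal_one]
  have hs2 : Summable (fun m : ℕ => (m : ℝ) * p m) := by
    by_contra hns
    rw [tsum_eq_zero_of_not_summable hns] at hsum
    exact hμne hsum.symm
  calc ∑' m : ℕ, p m * ∫ y : Fin m → Y,
        (a x + (μ x)⁻¹ * ∑ i : Fin m, (h (x, y i) - a x))
        ∂(Measure.pi fun _ : Fin m => η x)
      = ∑' m : ℕ, (p m * a x + ((μ x)⁻¹ * (I - a x)) * ((m : ℝ) * p m)) := by
        refine tsum_congr fun m => ?_
        rw [hA m]; ring
    _ = (∑' m : ℕ, p m * a x) + ∑' m : ℕ, ((μ x)⁻¹ * (I - a x)) * ((m : ℝ) * p m) :=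
        Summable.tsum_add (hpsum.mul_right _) (hs2.mul_left _)
    _ = a x + ((μ x)⁻¹ * (I - a x)) * μ x := by
        rw [tsum_mul_right, hp1, one_mul, tsum_mul_left, hsum]
    _ = I := by field_simp; ring
end

section
/- Given a real number a, a positive real μ, an i.i.d. sequence (W_i)_{i≥1} of square-integrable real random variables, and a square-integrable nonnegative-integer-valued random variable M, independent of the sequence (W_i), with E[M] = μ, define the multifidelity correction estimator S = a + μ^{−1} Σ_{i=1}^{M} (W_i − a). Then E[S²] = (E[W_1])² + μ^{−1} [ Var(W_1) + (Var(M)/μ) (E[W_1] − a)² ]. -/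
open MeasureTheory ProbabilityTheory

/-- General second-moment formula for the multifidelity correction estimator:
with `(Wᵢ)` i.i.d. square-integrable and `M` a square-integrable
nonnegative-integer-valued random variable independent of the sequence with
`E[M] = μ > 0`, the estimator `S = a₀ + μ⁻¹ ∑_{i < M} (Wᵢ - a₀)` satisfies
`E[S²] = (E[W₀])² + μ⁻¹ (Var(W₀) + (Var(M)/μ) (E[W₀] - a₀)²)`. -/
theorem multifidelity_correction_second_moment_general
    {Ω : Type*} [MeasurableSpace Ω] {P : Measure Ω} [IsProbabilityMeasure P]
    (a₀ μ : ℝ) (hμ : 0 < μ)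
    (W : ℕ → Ω → ℝ) (hWm : ∀ i, Measurable (W i))
    (hindep : iIndepFun W P)
    (hident : ∀ i, IdentDistrib (W i) (W 0) P P)
    (hsq : ∀ i, MemLp (W i) 2 P)
    (M : Ω → ℕ) (hM : Measurable M)
    (hMsq : MemLp (fun ω => (M ω : ℝ)) 2 P)
    (hMindep : IndepFun M (fun ω i => W i ω) P)
    (hMmean : ∫ ω, (M ω : ℝ) ∂P = μ) :
    ∫ ω, (a₀ + μ⁻¹ * ∑ i ∈ Finset.range (M ω), (W i ω - a₀)) ^ 2 ∂P
      = (∫ ω, W 0 ω ∂P) ^ 2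
        + μ⁻¹ * (variance (W 0) P
          + (variance (fun ω => (M ω : ℝ)) P / μ) * ((∫ ω, W 0 ω ∂P) - a₀) ^ 2) := by
  classical
  have hμ0 : μ ≠ 0 := hμ.ne'
  set EW : ℝ := ∫ ω, W 0 ω ∂P with hEWdef
  set σ2 : ℝ := variance (W 0) P with hσ2def
  set m : ℝ := EW - a₀ with hmdef
  -- centered variables
  set V : ℕ → Ω → ℝ := fun i ω => W i ω - a₀ with hVdef
  have hVm : ∀ i, Measurable (V i) := fun i => (hWm i).sub measurable_const
  have hVsq : ∀ i, MemLp (V i) 2 P := fun i => (hsq i).sub (memLp_const a₀)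
  have hWint : ∀ i, Integrable (W i) P := fun i => (hsq i).integrable one_le_two
  have hVint : ∀ i, Integrable (V i) P := fun i => (hVsq i).integrable one_le_two
  have hVmean : ∀ i, ∫ ω, V i ω ∂P = m := by
    intro i
    simp only [hVdef]
    rw [integral_sub (hWint i) (integrable_const _), integral_const, probReal_univ,
      one_smul, (hident i).integral_eq]
  have hVident : ∀ i, IdentDistrib (V i) (V 0) P P := fun i =>
    (hident i).comp (measurable_id.sub_const a₀)
  have hW0sq : Integrable (fun ω => W 0 ω ^ 2) P := (hsq 0).integrable_sq
  have hVvar : ∀ i, variance (V i) P = σ2 := by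
    intro i
    rw [(hVident i).variance_eq, hσ2def, variance_eq_sub (hVsq 0), variance_eq_sub (hsq 0)]
    have h1 : ∫ ω, ((V 0) ^ 2) ω ∂P = ∫ ω, W 0 ω ^ 2 ∂P - 2 * a₀ * EW + a₀ ^ 2 := by
      have e1 : (fun ω => ((V 0) ^ 2) ω)
          = fun ω => (W 0 ω ^ 2 - 2 * a₀ * W 0 ω) + a₀ ^ 2 := by
        funext ω; simp only [Pi.pow_apply, hVdef]; ring
      have i1 : Integrable (fun ω => W 0 ω ^ 2 - 2 * a₀ * W 0 ω) P := by
        exact hW0sq.sub ((hWint 0).const_mul _)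
      rw [e1, integral_add i1 (integrable_const _),
        integral_sub hW0sq ((hWint 0).const_mul _), integral_const_mul, integral_const,
        probReal_univ, one_smul]
    have h2 : ∫ ω, V 0 ω ∂P = m := hVmean 0
    have h3 : ∫ ω, ((W 0) ^ 2) ω ∂P = ∫ ω, W 0 ω ^ 2 ∂P := by
      simp only [Pi.pow_apply]
    rw [h3, h1]
    have h2' : ∫ ω, V 0 ω ∂P = m := h2
    rw [h2']
    simp only [hmdef]
    ring
  have hVindep : iIndepFun V P :=
    hindep.comp (fun _ x => x - a₀) (fun _ => measurable_id.sub_const a₀)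
  -- partial sums
  set T : ℕ → Ω → ℝ := fun n ω => ∑ i ∈ Finset.range n, V i ω with hTdef
  have hTfun : ∀ n, T n = ∑ i ∈ Finset.range n, V i := by
    intro n; funext ω; simp [hTdef]
  have hTsq : ∀ n, MemLp (T n) 2 P := by
    intro n; rw [hTfun n]; exact memLp_finset_sum' _ (fun i _ => hVsq i)
  have hTint : ∀ n, Integrable (T n) P := fun n => (hTsq n).integrable one_le_two
  have hTmean : ∀ n, ∫ ω, T n ω ∂P = n * m := by
    intro n
    rw [show (fun ω => T n ω) = fun ω => ∑ i ∈ Finset.range n, V i ω from rfl,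
      integral_finset_sum _ (fun i _ => hVint i)]
    simp [hVmean, Finset.sum_const]
  have hTvar : ∀ n, variance (T n) P = n * σ2 := by
    intro n
    rw [hTfun n, IndepFun.variance_sum (fun i _ => hVsq i)
      (fun i _ j _ hij => hVindep.indepFun hij)]
    simp [hVvar]
  have hTsqmean : ∀ n, ∫ ω, T n ω ^ 2 ∂P = n * σ2 + (n * m) ^ 2 := by
    intro n
    have h := variance_eq_sub (hTsq n)
    have h' : ∫ ω, ((T n) ^ 2) ω ∂P = ∫ ω, T n ω ^ 2 ∂P := by simp only [Pi.pow_apply]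
    rw [h', hTmean n] at h
    rw [← hTvar n]
    linarith [h]
  -- the per-n payoff
  set e : ℕ → ℝ := fun n =>
    a₀ ^ 2 + 2 * a₀ * μ⁻¹ * (n * m) + μ⁻¹ ^ 2 * (n * σ2 + (n * m) ^ 2) with hedef
  have hSnint : ∀ n, Integrable (fun ω => (a₀ + μ⁻¹ * T n ω) ^ 2) P := by
    intro n
    have e1 : (fun ω => (a₀ + μ⁻¹ * T n ω) ^ 2)
        = fun ω => (a₀ ^ 2 + (2 * a₀ * μ⁻¹) * T n ω) + μ⁻¹ ^ 2 * T n ω ^ 2 := by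
      funext ω; ring
    rw [e1]
    exact ((integrable_const _).add ((hTint n).const_mul _)).add
      (((hTsq n).integrable_sq).const_mul _)
  have hSnval : ∀ n, ∫ ω, (a₀ + μ⁻¹ * T n ω) ^ 2 ∂P = e n := by
    intro n
    have e1 : (fun ω => (a₀ + μ⁻¹ * T n ω) ^ 2)
        = fun ω => (a₀ ^ 2 + (2 * a₀ * μ⁻¹) * T n ω) + μ⁻¹ ^ 2 * T n ω ^ 2 := by
      funext ω; ring
    have i1 : Integrable (fun ω => a₀ ^ 2 + 2 * a₀ * μ⁻¹ * T n ω) P := by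
      exact (integrable_const _).add ((hTint n).const_mul _)
    have i2 : Integrable (fun ω => μ⁻¹ ^ 2 * T n ω ^ 2) P := by
      exact ((hTsq n).integrable_sq).const_mul _
    rw [e1, integral_add i1 i2,
      integral_add (integrable_const _) ((hTint n).const_mul _),
      integral_const_mul, integral_const_mul, integral_const, probReal_univ,
      one_smul, hTmean n, hTsqmean n, hedef]
  have he_nonneg : ∀ n, 0 ≤ e n := by
    intro n; rw [← hSnval n]; exact integral_nonneg fun ω => sq_nonneg _
  -- sequence view and payoff function
  set Wseq : Ω → ℕ → ℝ := fun ω i => W i ω with hWseqdef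
  have hWseqm : Measurable Wseq := measurable_pi_lambda _ (fun i => hWm i)
  set G : ℕ → (ℕ → ℝ) → ℝ := fun n w =>
    (a₀ + μ⁻¹ * ∑ i ∈ Finset.range n, (w i - a₀)) ^ 2 with hGdef
  have hGm : ∀ n, Measurable (G n) := by
    intro n
    apply Measurable.pow_const
    exact measurable_const.add (measurable_const.mul
      (Finset.measurable_sum _ (fun i _ => (measurable_pi_apply i).sub measurable_const)))
  have hGW : ∀ n ω, G n (Wseq ω) = (a₀ + μ⁻¹ * T n ω) ^ 2 := fun n ω => rfl
  -- partition by the value of M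
  set A : ℕ → Set Ω := fun n => M ⁻¹' {n} with hAdef
  have hA : ∀ n, MeasurableSet (A n) := fun n => hM (measurableSet_singleton n)
  have hdisj : Pairwise (Function.onFun Disjoint A) := fun i j hij =>
    Set.disjoint_left.2 fun ω h1 h2 => hij (h1.symm.trans h2)
  have hcover : ⋃ n, A n = Set.univ := by
    ext ω; simp [hAdef]
  set p : ℕ → ℝ := fun n => (P (A n)).toReal with hpdef
  -- the estimator squared
  set S2 : Ω → ℝ := fun ω =>
    (a₀ + μ⁻¹ * ∑ i ∈ Finset.range (M ω), (W i ω - a₀)) ^ 2 with hS2def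
  have hS2eq : ∀ ω, S2 ω = G (M ω) (Wseq ω) := fun ω => rfl
  have hS2m : Measurable S2 := by
    have hF : Measurable (fun q : (ℕ → ℝ) × ℕ => G q.2 q.1) :=
      measurable_from_prod_countable_left (fun n => hGm n)
    have : S2 = fun ω => (fun q : (ℕ → ℝ) × ℕ => G q.2 q.1) (Wseq ω, M ω) := rfl
    rw [this]
    exact hF.comp (hWseqm.prodMk hM)
  have hS2nn : ∀ ω, 0 ≤ S2 ω := fun ω => sq_nonneg _
  -- value of each piece
  have hpiece : ∀ n, ∫ ω in A n, S2 ω ∂P = p n * e n := by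
    intro n
    have h1 : ∫ ω in A n, S2 ω ∂P = ∫ ω in A n, G n (Wseq ω) ∂P := by
      apply setIntegral_congr_fun (hA n)
      intro ω hω
      have hn : M ω = n := hω
      rw [hS2eq ω, hn]
    have h2 : (Set.indicator (A n) fun ω => G n (Wseq ω))
        = fun ω => (fun k => if k = n then (1:ℝ) else 0) (M ω) * G n (Wseq ω) := by
      funext ω
      by_cases h : M ω = n
      · have : ω ∈ A n := h
        simp [Set.indicator_of_mem this, h]
      · have : ω ∉ A n := h
        simp [Set.indicator_of_notMem this, h]
    have hindm : Measurable (fun k => if k = n then (1:ℝ) else 0) := measurable_from_top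
    have hind : IndepFun (fun ω => (fun k => if k = n then (1:ℝ) else 0) (M ω))
        (fun ω => G n (Wseq ω)) P := by
      exact hMindep.comp hindm (hGm n)
    rw [h1, ← integral_indicator (hA n), h2,
      hind.integral_fun_mul_eq_mul_integral (Measurable.aestronglyMeasurable (by
        exact hindm.comp hM))
        ((hGm n).comp hWseqm).aestronglyMeasurable]
    have h3 : ∫ ω, (fun k => if k = n then (1:ℝ) else 0) (M ω) ∂P = p n := by
      have : (fun ω => (fun k => if k = n then (1:ℝ) else 0) (M ω))
          = Set.indicator (A n) fun _ => (1:ℝ) := by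
        funext ω
        by_cases h : M ω = n
        · have : ω ∈ A n := h
          simp [Set.indicator_of_mem this, h]
        · have : ω ∉ A n := h
          simp [Set.indicator_of_notMem this, h]
      rw [this, integral_indicator_const _ (hA n), smul_eq_mul, mul_one, measureReal_def]
    have h4 : ∫ ω, G n (Wseq ω) ∂P = e n := by
      rw [show (fun ω => G n (Wseq ω)) = fun ω => (a₀ + μ⁻¹ * T n ω) ^ 2 from rfl]
      exact hSnval n
    rw [h3, h4]
  -- HasSum facts for the distribution of M
  have hp1 : HasSum p 1 := by
    have h := hasSum_integral_iUnion (μ := P) (f := fun _ => (1:ℝ)) hA hdisj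
      ((integrable_const _).integrableOn)
    rw [hcover, Measure.restrict_univ] at h
    exact (by simpa [setIntegral_const, measure_univ] using h : HasSum (fun n => P.real (A n)) 1)
  have hMint : Integrable (fun ω => (M ω : ℝ)) P := hMsq.integrable one_le_two
  have hpμ : HasSum (fun (n : ℕ) => (n : ℝ) * p n) μ := by
    have h := hasSum_integral_iUnion hA hdisj hMint.integrableOn
    rw [hcover, Measure.restrict_univ, hMmean] at h
    have h2 : ∀ n, ∫ ω in A n, (M ω : ℝ) ∂P = (n:ℝ) * p n := by
      intro n
      rw [setIntegral_congr_fun (hA n) (g := fun _ => (n:ℝ)) (fun ω hω => by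
        have h' : M ω = n := hω
        rw [h']), setIntegral_const, smul_eq_mul, mul_comm, measureReal_def]
    rwa [funext h2] at h
  set EM2 : ℝ := ∫ ω, (M ω : ℝ)^2 ∂P with hEM2def
  have hM2int : Integrable (fun ω => (M ω:ℝ)^2) P := hMsq.integrable_sq
  have hpM2 : HasSum (fun (n : ℕ) => (n : ℝ)^2 * p n) EM2 := by
    have h := hasSum_integral_iUnion hA hdisj hM2int.integrableOn
    rw [hcover, Measure.restrict_univ] at h
    have h2 : ∀ n, ∫ ω in A n, (M ω : ℝ)^2 ∂P = (n:ℝ)^2 * p n := by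
      intro n
      rw [setIntegral_congr_fun (hA n) (g := fun _ => (n:ℝ)^2) (fun ω hω => by
        have h' : M ω = n := hω
        rw [h']), setIntegral_const, smul_eq_mul, mul_comm, measureReal_def]
    rwa [funext h2] at h
  -- summability of p n * e n
  set c1 : ℝ := 2*a₀*μ⁻¹*m + μ⁻¹^2*σ2 with hc1def
  set c2 : ℝ := μ⁻¹^2*m^2 with hc2def
  have heq : (fun (n : ℕ) => a₀^2 * p n + c1 * ((n : ℝ) * p n) + c2 * ((n : ℝ)^2 * p n))
      = fun n => p n * e n := by
    funext n; simp only [hedef, hc1def, hc2def]; ring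
  have hbig : HasSum (fun n => p n * e n) (a₀^2 * 1 + c1 * μ + c2 * EM2) := by
    rw [← heq]
    exact ((hp1.mul_left _).add (hpμ.mul_left _)).add (hpM2.mul_left _)
  have hsummable : Summable (fun n => p n * e n) := hbig.summable
  -- integrability of S2
  have hlpiece : ∀ n, ∫⁻ ω in A n, ENNReal.ofReal (S2 ω) ∂P
      = ENNReal.ofReal (p n * e n) := by
    intro n
    have h1 : ∫⁻ ω in A n, ENNReal.ofReal (S2 ω) ∂P
        = ∫⁻ ω in A n, ENNReal.ofReal (G n (Wseq ω)) ∂P := by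
      apply setLIntegral_congr_fun (hA n)
      exact (fun ω hω => by
        have h' : M ω = n := hω
        rw [hS2eq ω, h'])
    have hind2m : Measurable (fun k => if k = n then (1:ENNReal) else 0) :=
      measurable_from_top
    have h2 : (Set.indicator (A n) fun ω => ENNReal.ofReal (G n (Wseq ω)))
        = fun ω => (fun k => if k = n then (1:ENNReal) else 0) (M ω)
            * ENNReal.ofReal (G n (Wseq ω)) := by
      funext ω
      by_cases h : M ω = n
      · have h' : ω ∈ A n := h
        simp [Set.indicator_of_mem h', h]
      · have h' : ω ∉ A n := h
        simp [Set.indicator_of_notMem h', h]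
    have hindep2 : IndepFun (fun ω => (fun k => if k = n then (1:ENNReal) else 0) (M ω))
        (fun ω => ENNReal.ofReal (G n (Wseq ω))) P := by
      exact hMindep.comp hind2m (ENNReal.measurable_ofReal.comp (hGm n))
    have ham1 : AEMeasurable (fun ω => (fun k => if k = n then (1:ENNReal) else 0) (M ω)) P := by
      exact (hind2m.comp hM).aemeasurable
    have ham2 : AEMeasurable (fun ω => ENNReal.ofReal (G n (Wseq ω))) P := by
      exact (ENNReal.measurable_ofReal.comp ((hGm n).comp hWseqm)).aemeasurable
    rw [h1, ← lintegral_indicator (hA n), h2,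
      lintegral_mul_eq_lintegral_mul_lintegral_of_indepFun'' ham1 ham2 hindep2]
    have h3 : ∫⁻ ω, (fun k => if k = n then (1:ENNReal) else 0) (M ω) ∂P = P (A n) := by
      have hh : (fun ω => (fun k => if k = n then (1:ENNReal) else 0) (M ω))
          = Set.indicator (A n) fun _ => (1 : ENNReal) := by
        funext ω
        by_cases h : M ω = n
        · have h' : ω ∈ A n := h
          simp [Set.indicator_of_mem h', h]
        · have h' : ω ∉ A n := h
          simp [Set.indicator_of_notMem h', h]
      rw [hh, lintegral_indicator_const (hA n), one_mul]
    have h4 : ∫⁻ ω, ENNReal.ofReal (G n (Wseq ω)) ∂P = ENNReal.ofReal (e n) := by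
      rw [← ofReal_integral_eq_lintegral_ofReal (by exact hSnint n)
        (ae_of_all _ (fun ω => by simp only [hGdef]; exact sq_nonneg _))]
      congr 1
      exact hSnval n
    have h5 : P (A n) = ENNReal.ofReal (p n) :=
      (ENNReal.ofReal_toReal (measure_ne_top P _)).symm
    rw [h3, h4, h5, ← ENNReal.ofReal_mul ENNReal.toReal_nonneg]
  have hS2int : Integrable S2 P := by
    refine ⟨hS2m.aestronglyMeasurable, ?_⟩
    have hl : ∫⁻ ω, ‖S2 ω‖ₑ ∂P = ∑' n, ENNReal.ofReal (p n * e n) := by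
      have hn : ∀ ω, ‖S2 ω‖ₑ = ENNReal.ofReal (S2 ω) := fun ω =>
        Real.enorm_eq_ofReal (hS2nn ω)
      simp_rw [hn]
      rw [← Measure.restrict_univ (μ := P), ← hcover, lintegral_iUnion hA hdisj]
      exact tsum_congr hlpiece
    rw [HasFiniteIntegral, hl, ← ENNReal.ofReal_tsum_of_nonneg
      (fun n => mul_nonneg ENNReal.toReal_nonneg (he_nonneg n)) hsummable]
    exact ENNReal.ofReal_lt_top
  -- sum the pieces
  have hsumS : HasSum (fun n => p n * e n) (∫ ω, S2 ω ∂P) := by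
    have h := hasSum_integral_iUnion hA hdisj (by rw [hcover]; exact hS2int.integrableOn)
    rw [hcover, Measure.restrict_univ] at h
    rwa [funext hpiece] at h
  have hfinal : ∫ ω, S2 ω ∂P = a₀^2 * 1 + c1 * μ + c2 * EM2 := hsumS.unique hbig
  -- identify EM2 with the variance of M
  have hMvar : variance (fun ω => (M ω:ℝ)) P = EM2 - μ^2 := by
    rw [variance_eq_sub hMsq, hMmean, hEM2def]
    congr 1
  show ∫ ω, S2 ω ∂P = EW ^ 2 + μ⁻¹ * (σ2 + variance (fun ω => (M ω:ℝ)) P / μ * m ^ 2)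
  rw [hfinal, hMvar]
  simp only [hc1def, hc2def, hmdef]
  field_simp
  ring
end

section
/- Given a real number a, reals 0 < μ ≤ n with n a positive integer, an i.i.d. sequence (W_i)_{i≥1} of square-integrable real random variables, and a random variable M, independent of the sequence (W_i), having the binomial distribution with n trials and success probability μ/n, define the multifidelity correction estimator S = a + μ^{−1} Σ_{i=1}^{M} (W_i − a). Then E[S²] = (E[W_1])² + E[(W_1 − a)²]/μ − (E[W_1] − a)²/n. -/
open MeasureTheory ProbabilityTheory Finset

lemma binom0 (p : ℝ) (n : ℕ) :
    ∑ m ∈ range (n + 1), (n.choose m : ℝ) * p ^ m * (1 - p) ^ (n - m) = 1 := by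
  calc ∑ m ∈ range (n + 1), (n.choose m : ℝ) * p ^ m * (1 - p) ^ (n - m)
      = ∑ m ∈ range (n + 1), p ^ m * (1 - p) ^ (n - m) * (n.choose m : ℝ) :=
        Finset.sum_congr rfl fun m _ => by ring
    _ = (p + (1 - p)) ^ n := (add_pow p (1 - p) n).symm
    _ = 1 := by simp

lemma binom1 (p : ℝ) (n : ℕ) :
    ∑ m ∈ range (n + 1), (m : ℝ) * ((n.choose m : ℝ) * p ^ m * (1 - p) ^ (n - m))
      = n * p := by
  induction n with
  | zero => simp
  | succ N _ =>
    rw [Finset.sum_range_succ']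
    simp only [Nat.cast_zero, zero_mul, add_zero]
    have key : ∀ k, ((k + 1 : ℕ) : ℝ) * (((N+1).choose (k+1) : ℝ) * p ^ (k+1) * (1 - p) ^ (N + 1 - (k+1)))
        = (N + 1 : ℝ) * p * ((N.choose k : ℝ) * p ^ k * (1 - p) ^ (N - k)) := by
      intro k
      have h := Nat.add_one_mul_choose_eq N k
      have h' : ((N+1 : ℕ) : ℝ) * (N.choose k : ℝ) = ((N+1).choose (k+1) : ℝ) * ((k+1 : ℕ) : ℝ) := by
        exact_mod_cast congrArg (Nat.cast : ℕ → ℝ) h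
      have hsub : N + 1 - (k + 1) = N - k := by omega
      rw [hsub]
      push_cast at h' ⊢
      linear_combination (-(p ^ (k+1)) * (1 - p) ^ (N - k)) * h'
    rw [Finset.sum_congr rfl (fun k _ => key k), ← Finset.mul_sum, binom0 p N]
    push_cast; ring

lemma binom2 (p : ℝ) (n : ℕ) :
    ∑ m ∈ range (n + 1), (m : ℝ) * ((m : ℝ) - 1) * ((n.choose m : ℝ) * p ^ m * (1 - p) ^ (n - m))
      = n * (n - 1) * p ^ 2 := by
  cases n with
  | zero => simp
  | succ N =>
    rw [Finset.sum_range_succ']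
    simp only [Nat.cast_zero, zero_mul, add_zero]
    have key : ∀ k, ((k + 1 : ℕ) : ℝ) * (((k + 1 : ℕ) : ℝ) - 1) * (((N+1).choose (k+1) : ℝ) * p ^ (k+1) * (1 - p) ^ (N + 1 - (k+1)))
        = (N + 1 : ℝ) * p * ((k : ℝ) * ((N.choose k : ℝ) * p ^ k * (1 - p) ^ (N - k))) := by
      intro k
      have h := Nat.add_one_mul_choose_eq N k
      have h' : ((N+1 : ℕ) : ℝ) * (N.choose k : ℝ) = ((N+1).choose (k+1) : ℝ) * ((k+1 : ℕ) : ℝ) := by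
        exact_mod_cast congrArg (Nat.cast : ℕ → ℝ) h
      have hsub : N + 1 - (k + 1) = N - k := by omega
      rw [hsub]
      push_cast at h' ⊢
      linear_combination (-(k * p ^ (k+1) * (1 - p) ^ (N - k))) * h'
    rw [Finset.sum_congr rfl (fun k _ => key k), ← Finset.mul_sum, binom1 p N]
    push_cast; ring



/-- Second moment of the multifidelity correction estimator with a binomial
number of high-fidelity simulations: with `(Wᵢ)` i.i.d. square-integrable and
`M ~ Bin(n, μ/n)` independent of the sequence (so `E[M] = μ`, `0 < μ ≤ n`),
`S = a₀ + μ⁻¹ ∑_{i < M} (Wᵢ - a₀)` satisfies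
`E[S²] = (E[W₀])² + E[(W₀ - a₀)²]/μ - (E[W₀] - a₀)²/n`. -/
theorem multifidelity_correction_second_moment_binomial
    {Ω : Type*} [MeasurableSpace Ω] {P : Measure Ω} [IsProbabilityMeasure P]
    (a₀ μ : ℝ) (n : ℕ) (hn : 0 < n) (hμ : 0 < μ) (hμn : μ ≤ n)
    (W : ℕ → Ω → ℝ) (hWm : ∀ i, Measurable (W i))
    (hindep : iIndepFun W P)
    (hident : ∀ i, IdentDistrib (W i) (W 0) P P)
    (hsq : ∀ i, MemLp (W i) 2 P)
    (M : Ω → ℕ) (hM : Measurable M)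
    (hMindep : IndepFun M (fun ω i => W i ω) P)
    (hMdist : ∀ m : ℕ,
      P {ω | M ω = m} = ENNReal.ofReal
        ((n.choose m : ℝ) * (μ / n) ^ m * (1 - μ / n) ^ (n - m))) :
    ∫ ω, (a₀ + μ⁻¹ * ∑ i ∈ Finset.range (M ω), (W i ω - a₀)) ^ 2 ∂P
      = (∫ ω, W 0 ω ∂P) ^ 2 + (∫ ω, (W 0 ω - a₀) ^ 2 ∂P) / μ
        - ((∫ ω, W 0 ω ∂P) - a₀) ^ 2 / n := by
  have hn' : (0:ℝ) < n := by exact_mod_cast hn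
  set p : ℝ := μ / n with hp_def
  set pm : ℕ → ℝ := fun m => (n.choose m : ℝ) * p ^ m * (1 - p) ^ (n - m) with hpm_def
  have hp0 : 0 ≤ p := by positivity
  have hq0 : 0 ≤ 1 - p := by
    rw [sub_nonneg]; exact div_le_one_of_le₀ hμn hn'.le
  have hpm0 : ∀ m, 0 ≤ pm m := fun m => by
    apply mul_nonneg (mul_nonneg (by positivity) (by positivity)) (by positivity)
  set X : ℕ → Ω → ℝ := fun i ω => W i ω - a₀ with hX_def
  have hXm : ∀ i, Measurable (X i) := fun i => (hWm i).sub measurable_const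
  have hXsq : ∀ i, MemLp (X i) 2 P := fun i => (hsq i).sub (memLp_const a₀)
  have hXint : ∀ i, Integrable (X i) P := fun i => (hXsq i).integrable one_le_two
  set m1 : ℝ := ∫ ω, X 0 ω ∂P with hm1_def
  set m2 : ℝ := ∫ ω, (X 0 ω) ^ 2 ∂P with hm2_def
  have hX_ident : ∀ i, IdentDistrib (X i) (X 0) P P := fun i =>
    (hident i).comp (measurable_id.sub measurable_const)
  have hint1 : ∀ i, ∫ ω, X i ω ∂P = m1 := fun i => (hX_ident i).integral_eq
  have hint2 : ∀ i, ∫ ω, (X i ω) ^ 2 ∂P = m2 := fun i =>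
    ((hX_ident i).comp (measurable_id.pow_const 2)).integral_eq
  have hXindep : ∀ i j, i ≠ j → IndepFun (X i) (X j) P := fun i j hij =>
    (hindep.indepFun hij).comp (measurable_id.sub measurable_const)
      (measurable_id.sub measurable_const)
  have hprodint : ∀ i j, Integrable (fun ω => X i ω * X j ω) P := by
    intro i j
    by_cases hij : i = j
    · subst hij
      have := (hXsq i).integrable_sq
      simpa [pow_two] using this
    · exact (hXindep i j hij).integrable_mul (hXint i) (hXint j)
  have hmul : ∀ i j, (∫ ω, X i ω * X j ω ∂P) = if i = j then m2 else m1 ^ 2 := by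
    intro i j
    by_cases hij : i = j
    · subst hij; simp only [if_true]
      rw [← hint2 i]; congr 1; ext ω; ring
    · simp only [hij, if_false]
      rw [(hXindep i j hij).integral_fun_mul_eq_mul_integral (hXm i).aestronglyMeasurable
        (hXm j).aestronglyMeasurable, hint1 i, hint1 j, sq]
  -- partial sums
  set T : ℕ → Ω → ℝ := fun m ω => ∑ i ∈ range m, X i ω with hT_def
  have hTsq : ∀ m, MemLp (T m) 2 P := by
    intro m
    have h := memLp_finset_sum' (range m) (fun i (_ : i ∈ range m) => hXsq i)
    convert h using 1
    ext ω
    simp [hT_def, Finset.sum_apply]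
  have hTint : ∀ m, (∫ ω, T m ω ∂P) = m * m1 := by
    intro m
    rw [hT_def]
    rw [integral_finset_sum _ (fun i _ => hXint i)]
    simp [hint1, Finset.sum_const, card_range]
  have hT2int : ∀ m, (∫ ω, (T m ω) ^ 2 ∂P) = m * m2 + ((m : ℝ) ^ 2 - m) * m1 ^ 2 := by
    intro m
    have hpt : ∀ ω, (T m ω) ^ 2 = ∑ i ∈ range m, ∑ j ∈ range m, X i ω * X j ω := by
      intro ω; rw [hT_def, sq, Finset.sum_mul_sum]
    simp only [hpt]
    rw [integral_finset_sum _ (fun i _ => integrable_finset_sum _ (fun j _ => hprodint i j))]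
    have : ∀ i ∈ range m, (∫ ω, ∑ j ∈ range m, X i ω * X j ω ∂P)
        = ∑ j ∈ range m, ((if i = j then m2 else m1 ^ 2)) := by
      intro i _
      rw [integral_finset_sum _ (fun j _ => hprodint i j)]
      exact Finset.sum_congr rfl fun j _ => hmul i j
    rw [Finset.sum_congr rfl this]
    -- diag sum
    have h : ∀ i ∈ range m, ∑ j ∈ range m, (if i = j then m2 else m1 ^ 2)
        = m * m1 ^ 2 + (m2 - m1 ^ 2) := by
      intro i hi
      have e : ∀ j, (if i = j then m2 else m1 ^ 2)
          = m1 ^ 2 + (if i = j then m2 - m1 ^ 2 else 0) := by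
        intro j; by_cases h : i = j <;> simp [h]
      simp only [e, Finset.sum_add_distrib, Finset.sum_const, card_range, nsmul_eq_mul,
        Finset.sum_ite_eq, hi, if_true]
    rw [Finset.sum_congr rfl h, Finset.sum_const, card_range, nsmul_eq_mul]
    ring
  -- integrand conditional on M = m
  set F : ℕ → Ω → ℝ := fun m ω => (a₀ + μ⁻¹ * T m ω) ^ 2 with hF_def
  have hFMeml : ∀ m, MemLp (fun ω => a₀ + μ⁻¹ * T m ω) 2 P := fun m =>
    (memLp_const a₀).add ((hTsq m).const_mul μ⁻¹)
  have hFint : ∀ m, Integrable (F m) P := by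
    intro m
    have := (hFMeml m).integrable_sq
    simpa [hF_def] using this
  have hFval : ∀ m, (∫ ω, F m ω ∂P)
      = a₀ ^ 2 + 2 * a₀ * μ⁻¹ * (m * m1)
        + μ⁻¹ ^ 2 * (m * m2 + ((m : ℝ) ^ 2 - m) * m1 ^ 2) := by
    intro m
    have hpt : ∀ ω, F m ω = a₀ ^ 2 + (2 * a₀ * μ⁻¹) * T m ω + μ⁻¹ ^ 2 * (T m ω) ^ 2 := by
      intro ω; rw [hF_def]; ring
    simp only [hpt]
    have I3 : Integrable (fun ω => 2 * a₀ * μ⁻¹ * T m ω) P :=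
      ((hTsq m).integrable one_le_two).const_mul _
    have I2 : Integrable (fun ω => μ⁻¹ ^ 2 * (T m ω) ^ 2) P :=
      ((hTsq m).integrable_sq).const_mul _
    have I1 : Integrable (fun ω => a₀ ^ 2 + 2 * a₀ * μ⁻¹ * T m ω) P :=
      (integrable_const _).add I3
    rw [integral_add I1 I2, integral_add (integrable_const _) I3,
      integral_const_mul, integral_const_mul, integral_const, hTint m, hT2int m]
    simp
  -- events
  have hMev : ∀ m, MeasurableSet {ω | M ω = m} := fun m => hM (measurableSet_singleton m)
  have hdisj : Set.PairwiseDisjoint ↑(range (n+1)) (fun m => {ω | M ω = m}) := by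
    intro i _ j _ hij
    refine Set.disjoint_left.2 fun ω hi hj => hij ?_
    simp only [Set.mem_setOf_eq] at hi hj
    omega
  have hsum1 : P {ω | M ω ≤ n} = 1 := by
    have hset : {ω | M ω ≤ n} = ⋃ m ∈ range (n+1), {ω | M ω = m} := by
      ext ω
      simp [Nat.lt_succ_iff]
    rw [hset, measure_biUnion_finset hdisj (fun m _ => hMev m)]
    rw [Finset.sum_congr rfl (fun m _ => hMdist m),
      ← ENNReal.ofReal_sum_of_nonneg (fun m _ => hpm0 m)]
    have hone : ∑ i ∈ range (n+1), pm i = 1 := by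
      simp only [hpm_def]; exact binom0 p n
    rw [hone]; simp
  have haeM : ∀ᵐ ω ∂P, M ω ≤ n := by
    rw [ae_iff]
    have hms : MeasurableSet {ω | M ω ≤ n} := hM measurableSet_Iic
    have : {ω | ¬ M ω ≤ n} = {ω | M ω ≤ n}ᶜ := rfl
    rw [this, prob_compl_eq_zero_iff hms]
    exact hsum1
  -- conditional split
  have hcongr : (fun ω => F (M ω) ω)
      =ᵐ[P] (fun ω => ∑ m ∈ range (n+1), Set.indicator {ω' | M ω' = m} (F m) ω) := by
    filter_upwards [haeM] with ω hω
    have hind : ∀ m, Set.indicator {ω' | M ω' = m} (F m) ω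
        = if M ω = m then F m ω else 0 := by
      intro m; rw [Set.indicator_apply]; simp [Set.mem_setOf_eq]
    simp only [hind]
    rw [Finset.sum_ite_eq (range (n+1)) (M ω) (fun m => F m ω)]
    simp [Nat.lt_succ_iff, hω]
  have hWvec : Measurable (fun ω i => W i ω) :=
    measurable_pi_lambda _ (fun i => hWm i)
  have hIndicInt : ∀ m, (∫ ω, Set.indicator {ω' | M ω' = m} (F m) ω ∂P)
      = pm m * ∫ ω, F m ω ∂P := by
    intro m
    set φ : (ℕ → ℝ) → ℝ :=
      fun v => (a₀ + μ⁻¹ * ∑ i ∈ range m, (v i - a₀)) ^ 2 with hφ_def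
    have hφm : Measurable φ := by
      apply Measurable.pow_const
      apply Measurable.const_add
      apply Measurable.const_mul
      exact Finset.measurable_sum _ (fun i _ => (measurable_pi_apply i).sub measurable_const)
    set g : ℕ → ℝ := fun k => if k = m then (1:ℝ) else 0 with hg_def
    have hgm : Measurable g := measurable_from_top
    have hInd : IndepFun (g ∘ M) (φ ∘ (fun ω i => W i ω)) P := hMindep.comp hgm hφm
    have hgcomp : ∀ ω, Set.indicator {ω' | M ω' = m} (F m) ω
        = (g ∘ M) ω * (φ ∘ (fun ω i => W i ω)) ω := by
      intro ω
      by_cases h : M ω = m <;>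
        simp [Set.indicator_apply, h, hg_def, hφ_def, hF_def, hT_def, hX_def]
    have hstep : (∫ ω, Set.indicator {ω' | M ω' = m} (F m) ω ∂P)
        = (∫ ω, (g ∘ M) ω ∂P) * ∫ ω, (φ ∘ (fun ω i => W i ω)) ω ∂P := by
      rw [integral_congr_ae (Filter.Eventually.of_forall hgcomp)]
      exact hInd.integral_fun_mul_eq_mul_integral (hgm.comp hM).aestronglyMeasurable
        (hφm.comp hWvec).aestronglyMeasurable
    have hg_int : (∫ ω, (g ∘ M) ω ∂P) = pm m := by
      have : ∀ ω, (g ∘ M) ω = Set.indicator {ω' | M ω' = m} (fun _ => (1:ℝ)) ω := by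
        intro ω; by_cases h : M ω = m <;> simp [Set.indicator_apply, h, hg_def]
      rw [integral_congr_ae (Filter.Eventually.of_forall this)]
      have := integral_indicator_one (hMev m) (μ := P)
      rw [show (Set.indicator {ω' | M ω' = m} (fun _ => (1:ℝ))) = ({ω' | M ω' = m}).indicator 1 from rfl]
      rw [this, measureReal_def, hMdist m, ENNReal.toReal_ofReal (hpm0 m)]
    have hφ_int : (∫ ω, (φ ∘ (fun ω i => W i ω)) ω ∂P) = ∫ ω, F m ω ∂P := rfl
    rw [hstep, hg_int, hφ_int]
  have key : (∫ ω, F (M ω) ω ∂P) = ∑ m ∈ range (n+1), pm m * ∫ ω, F m ω ∂P := by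
    rw [integral_congr_ae hcongr,
      integral_finset_sum _ (fun m _ => (hFint m).indicator (hMev m))]
    exact Finset.sum_congr rfl fun m _ => hIndicInt m
  -- assemble
  have hLHS : (∫ ω, (a₀ + μ⁻¹ * ∑ i ∈ Finset.range (M ω), (W i ω - a₀)) ^ 2 ∂P)
      = ∫ ω, F (M ω) ω ∂P := rfl
  have hW0 : (∫ ω, W 0 ω ∂P) = m1 + a₀ := by
    have h : (fun ω => W 0 ω) = fun ω => X 0 ω + a₀ := by
      ext ω; simp [hX_def]
    rw [h, integral_add (hXint 0) (integrable_const _), integral_const]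
    simp [hm1_def]
  have hW0' : (∫ ω, (W 0 ω - a₀) ^ 2 ∂P) = m2 := rfl
  rw [hLHS, key, hW0]
  have hexp : ∀ m ∈ range (n+1), pm m * (∫ ω, F m ω ∂P)
      = a₀ ^ 2 * pm m + (2 * a₀ * μ⁻¹ * m1) * ((m:ℝ) * pm m)
        + (μ⁻¹ ^ 2 * m2) * ((m:ℝ) * pm m)
        + (μ⁻¹ ^ 2 * m1 ^ 2) * ((m:ℝ) * ((m:ℝ) - 1) * pm m) := by
    intro m _
    rw [hFval m]; ring
  rw [Finset.sum_congr rfl hexp]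
  simp only [Finset.sum_add_distrib, ← Finset.mul_sum, hpm_def]
  rw [binom0 p n, binom1 p n, binom2 p n]
  rw [hp_def]
  field_simp
  ring
end

section
/- Given a real number a, a positive real μ, an i.i.d. sequence (W_i)_{i≥1} of square-integrable real random variables, and a random variable M, independent of the sequence (W_i), having the geometric distribution on the nonnegative integers with success probability p = 1/(1+μ) (so that E[M] = μ), define the multifidelity correction estimator S = a + μ^{−1} Σ_{i=1}^{M} (W_i − a). Then E[S²] = (E[W_1])² + E[(W_1 − a)²]/μ + (E[W_1] − a)². -/
open MeasureTheory ProbabilityTheory Finset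

lemma aux_hasSum_geom_sq {q : ℝ} (h0 : 0 ≤ q) (h1 : q < 1) :
    HasSum (fun m : ℕ => (m : ℝ) * ((m : ℝ) - 1) * q ^ m) (2 * q ^ 2 / (1 - q) ^ 3) := by
  have hq : ‖q‖ < 1 := by rw [Real.norm_eq_abs, abs_of_nonneg h0]; exact h1
  have h2 := (hasSum_choose_mul_geometric_of_norm_lt_one 2 hq).mul_left (2 * q ^ 2)
  have hch : ∀ n : ℕ, (((n + 2).choose 2 : ℕ) : ℝ) = ((n : ℝ) + 2) * ((n : ℝ) + 1) / 2 := by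
    intro n
    have h : (n + 2).choose 2 * 2 = (n + 2) * (n + 1) := by
      rw [Nat.choose_two_right]
      have hdvd : 2 ∣ (n + 2) * (n + 2 - 1) := by
        rcases Nat.even_or_odd n with ⟨k, hk⟩ | ⟨k, hk⟩
        · exact Dvd.dvd.mul_right ⟨k + 1, by omega⟩ _
        · exact Dvd.dvd.mul_left ⟨k + 1, by omega⟩ _
      rw [Nat.div_mul_cancel hdvd]; congr 1
    have := congrArg (fun k : ℕ => (k : ℝ)) h
    push_cast at this
    linarith
  have hfun : (fun n : ℕ => 2 * q ^ 2 * (((n + 2).choose 2 : ℕ) * q ^ n)) =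
      fun n : ℕ => ((n + 2 : ℕ) : ℝ) * (((n + 2 : ℕ) : ℝ) - 1) * q ^ (n + 2) := by
    funext n; rw [hch n]; push_cast; ring
  rw [hfun] at h2
  have h3 := (hasSum_nat_add_iff (f := fun m : ℕ => (m : ℝ) * ((m : ℝ) - 1) * q ^ m) 2).mp h2
  simpa [Finset.sum_range_succ, div_eq_mul_inv] using h3

lemma aux_sum_sq_integral {Ω : Type*} [MeasurableSpace Ω] {P : Measure Ω}
    [IsProbabilityMeasure P]
    (X : ℕ → Ω → ℝ) (hX2 : ∀ i, MemLp (X i) 2 P)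
    (hpair : ∀ i j, i ≠ j → IndepFun (X i) (X j) P)
    (hid : ∀ i, IdentDistrib (X i) (X 0) P P) (m : ℕ) :
    ∫ ω, (∑ i ∈ Finset.range m, X i ω) ^ 2 ∂P
      = m * (∫ ω, (X 0 ω) ^ 2 ∂P) + (m : ℝ) * ((m : ℝ) - 1) * (∫ ω, X 0 ω ∂P) ^ 2 := by
  have hint : ∀ i : ℕ, Integrable (X i) P := fun i => (hX2 i).integrable one_le_two
  have hSmem : MemLp (∑ i ∈ Finset.range m, X i) 2 P :=
    memLp_finset_sum' _ fun i _ => hX2 i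
  have hES : ∫ ω, (∑ i ∈ Finset.range m, X i ω) ∂P = m * ∫ ω, X 0 ω ∂P := by
    rw [integral_finset_sum _ fun i _ => hint i]
    rw [Finset.sum_congr rfl fun i _ => (hid i).integral_eq]
    simp [mul_comm]
  have hvar_sum : variance (∑ i ∈ Finset.range m, X i) P = m * variance (X 0) P := by
    rw [IndepFun.variance_sum (fun i _ => hX2 i)
      (fun i hi j hj hij => hpair i j hij)]
    rw [Finset.sum_congr rfl fun i _ => (hid i).variance_eq]
    simp [mul_comm]
  have hv0 : variance (X 0) P = (∫ ω, (X 0 ω) ^ 2 ∂P) - (∫ ω, X 0 ω ∂P) ^ 2 := by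
    have := variance_eq_sub (hX2 0)
    simpa using this
  have hvd := variance_eq_sub hSmem
  simp only [Pi.pow_apply, Finset.sum_apply] at hvd
  rw [hvar_sum, hv0, hES] at hvd
  have : ∫ ω, (∑ i ∈ Finset.range m, X i ω) ^ 2 ∂P
      = m * ((∫ ω, (X 0 ω) ^ 2 ∂P) - (∫ ω, X 0 ω ∂P) ^ 2)
        + ((m : ℝ) * ∫ ω, X 0 ω ∂P) ^ 2 := by linarith
  rw [this]; ring

lemma aux_main {Ω : Type*} [MeasurableSpace Ω] {P : Measure Ω} [IsProbabilityMeasure P]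
    (a₀ μ : ℝ) (hμ : 0 < μ)
    (X : ℕ → Ω → ℝ) (hXm : ∀ i, Measurable (X i))
    (hX2 : ∀ i, MemLp (X i) 2 P)
    (hpair : ∀ i j, i ≠ j → IndepFun (X i) (X j) P)
    (hXid : ∀ i, IdentDistrib (X i) (X 0) P P)
    (M : Ω → ℕ) (hM : Measurable M)
    (hindep2 : ∀ m : ℕ, IndepFun (fun ω => if M ω = m then (1 : ℝ) else 0)
        (fun ω => (a₀ + μ⁻¹ * ∑ i ∈ Finset.range m, X i ω) ^ 2) P)
    (hMdist : ∀ m : ℕ, P {ω | M ω = m} = ENNReal.ofReal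
        ((1 / (1 + μ)) * (1 - 1 / (1 + μ)) ^ m)) :
    ∫ ω, (a₀ + μ⁻¹ * ∑ i ∈ Finset.range (M ω), X i ω) ^ 2 ∂P
      = a₀ ^ 2 + (2 * a₀ * μ⁻¹ * (∫ ω, X 0 ω ∂P)
          + μ⁻¹ ^ 2 * (∫ ω, (X 0 ω) ^ 2 ∂P)) * μ
        + (μ⁻¹ ^ 2 * (∫ ω, X 0 ω ∂P) ^ 2) * (2 * μ ^ 2) := by
  classical
  have h1μ : (0 : ℝ) < 1 + μ := by linarith
  set p : ℝ := 1 / (1 + μ) with hp_def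
  set q : ℝ := 1 - p with hq_def
  have hp_pos : 0 < p := by positivity
  have hq_eq : q = μ * p := by rw [hq_def, hp_def]; field_simp; ring
  have hq_nonneg : 0 ≤ q := by rw [hq_eq]; positivity
  have hq_lt : q < 1 := by rw [hq_def]; linarith
  have h1q : 1 - q = p := by rw [hq_def]; ring
  set e₁ : ℝ := ∫ ω, X 0 ω ∂P with he₁
  set e₂ : ℝ := ∫ ω, (X 0 ω) ^ 2 ∂P with he₂
  set c₁ : ℝ := 2 * a₀ * μ⁻¹ * e₁ + μ⁻¹ ^ 2 * e₂ with hc₁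
  set c₂ : ℝ := μ⁻¹ ^ 2 * e₁ ^ 2 with hc₂
  have hXint : ∀ i, Integrable (X i) P := fun i => (hX2 i).integrable one_le_two
  -- the family of squared partial sums
  set g : ℕ → Ω → ℝ := fun m ω => (a₀ + μ⁻¹ * ∑ i ∈ Finset.range m, X i ω) ^ 2 with hg_def
  have hgm_meas : ∀ m : ℕ, Measurable (g m) := fun m =>
    (measurable_const.add
      ((Finset.measurable_sum _ fun i _ => hXm i).const_mul μ⁻¹)).pow_const 2
  have hSint : ∀ m, Integrable (fun ω => ∑ i ∈ Finset.range m, X i ω) P :=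
    fun m => integrable_finset_sum _ fun i _ => hXint i
  have hSmem : ∀ m, MemLp (fun ω => ∑ i ∈ Finset.range m, X i ω) 2 P := by
    intro m
    have h := memLp_finset_sum' (Finset.range m) (fun i (_ : i ∈ Finset.range m) => hX2 i)
    exact h.ae_eq (ae_of_all _ fun ω => by simp [Finset.sum_apply])
  have hgint : ∀ m, Integrable (g m) P := by
    intro m
    have hrw : g m = fun ω => a₀ ^ 2 + 2 * a₀ * μ⁻¹ * (∑ i ∈ Finset.range m, X i ω)
        + μ⁻¹ ^ 2 * (∑ i ∈ Finset.range m, X i ω) ^ 2 := by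
      funext ω; simp only [hg_def]; ring
    rw [hrw]
    exact ((integrable_const _).add ((hSint m).const_mul _)).add
      ((hSmem m).integrable_sq.const_mul _)
  -- the integral of g m
  have hI : ∀ m : ℕ, ∫ ω, g m ω ∂P
      = a₀ ^ 2 + c₁ * (m : ℝ) + c₂ * ((m : ℝ) * ((m : ℝ) - 1)) := by
    intro m
    have hES : ∫ ω, (∑ i ∈ Finset.range m, X i ω) ∂P = (m : ℝ) * e₁ := by
      rw [integral_finset_sum _ fun i _ => hXint i,
        Finset.sum_congr rfl fun i _ => (hXid i).integral_eq]
      simp [he₁, mul_comm]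
    have hES2 := aux_sum_sq_integral X hX2 hpair hXid m
    have hrw : ∫ ω, g m ω ∂P = ∫ ω, (a₀ ^ 2 + 2 * a₀ * μ⁻¹ * (∑ i ∈ Finset.range m, X i ω)
        + μ⁻¹ ^ 2 * (∑ i ∈ Finset.range m, X i ω) ^ 2) ∂P :=
      integral_congr_ae (ae_of_all _ fun ω => by simp only [hg_def]; ring)
    have int0 : Integrable (fun _ : Ω => a₀ ^ 2) P := integrable_const _
    have int3 : Integrable (fun ω => 2 * a₀ * μ⁻¹ * ∑ i ∈ Finset.range m, X i ω) P :=
      (hSint m).const_mul _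
    have int1 : Integrable
        (fun ω => a₀ ^ 2 + 2 * a₀ * μ⁻¹ * ∑ i ∈ Finset.range m, X i ω) P := int0.add int3
    have int2 : Integrable (fun ω => μ⁻¹ ^ 2 * (∑ i ∈ Finset.range m, X i ω) ^ 2) P :=
      (hSmem m).integrable_sq.const_mul _
    rw [hrw, integral_add int1 int2, integral_add int0 int3,
      integral_const, integral_const_mul, integral_const_mul, hES, hES2]
    simp only [measure_univ, probReal_univ, ENNReal.toReal_one, smul_eq_mul, one_mul, hc₁, hc₂, ← he₁, ← he₂]
    ring
  -- the indicator decomposition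
  set f : ℕ → Ω → ℝ := fun m => Set.indicator {ω | M ω = m} (g m) with hf_def
  have hset : ∀ m : ℕ, MeasurableSet {ω | M ω = m} := fun m => hM (measurableSet_singleton m)
  have hf_meas : ∀ m, Measurable (f m) := fun m => (hgm_meas m).indicator (hset m)
  have hf_nonneg : ∀ m ω, 0 ≤ f m ω := fun m ω =>
    Set.indicator_nonneg (fun ω _ => sq_nonneg _) ω
  have hf_int : ∀ m, Integrable (f m) P := fun m => (hgint m).indicator (hset m)
  have hPm : ∀ m : ℕ, (P {ω | M ω = m}).toReal = p * q ^ m := by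
    intro m
    rw [hMdist m, ENNReal.toReal_ofReal (by positivity)]
  -- integral of f m via independence
  have hfI : ∀ m : ℕ, ∫ ω, f m ω ∂P = (p * q ^ m) * ∫ ω, g m ω ∂P := by
    intro m
    have hprod : f m = fun ω => (if M ω = m then (1 : ℝ) else 0) * g m ω := by
      funext ω
      by_cases h : M ω = m
      · simp [hf_def, Set.indicator_apply, Set.mem_setOf_eq, h]
      · simp [hf_def, Set.indicator_apply, Set.mem_setOf_eq, h]
    have h1int : Integrable (fun ω => if M ω = m then (1 : ℝ) else 0) P := by
      have : (fun ω => if M ω = m then (1 : ℝ) else 0)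
          = Set.indicator {ω | M ω = m} (fun _ => (1 : ℝ)) := by
        funext ω; simp [Set.indicator_apply, Set.mem_setOf_eq]
      rw [this]; exact (integrable_const _).indicator (hset m)
    have hmul := (hindep2 m).integral_fun_mul_eq_mul_integral h1int.aestronglyMeasurable (hgint m).aestronglyMeasurable
    have h1I : ∫ ω, (if M ω = m then (1 : ℝ) else 0) ∂P = p * q ^ m := by
      have : (fun ω => if M ω = m then (1 : ℝ) else 0)
          = Set.indicator {ω | M ω = m} (fun _ => (1 : ℝ)) := by
        funext ω; simp [Set.indicator_apply, Set.mem_setOf_eq]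
      rw [this, integral_indicator_const (1 : ℝ) (hset m), smul_eq_mul, mul_one, measureReal_def, hPm]
    rw [hprod]
    calc ∫ ω, (if M ω = m then (1 : ℝ) else 0) * g m ω ∂P
        = (∫ ω, (if M ω = m then (1 : ℝ) else 0) ∂P) * ∫ ω, g m ω ∂P := hmul
      _ = (p * q ^ m) * ∫ ω, g m ω ∂P := by rw [h1I]
  -- the geometric series
  have hnorm : ‖q‖ < 1 := by rw [Real.norm_eq_abs, abs_of_nonneg hq_nonneg]; exact hq_lt
  have hgeo0 : HasSum (fun m : ℕ => q ^ m) (1 - q)⁻¹ :=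
    hasSum_geometric_of_lt_one hq_nonneg hq_lt
  have hgeo1 : HasSum (fun m : ℕ => (m : ℝ) * q ^ m) (q / (1 - q) ^ 2) :=
    hasSum_coe_mul_geometric_of_norm_lt_one hnorm
  have hgeo2 := aux_hasSum_geom_sq hq_nonneg hq_lt
  have hbig := (((hgeo0.mul_left (a₀ ^ 2)).add (hgeo1.mul_left c₁)).add
    (hgeo2.mul_left c₂)).mul_left p
  have hfun2 : (fun m : ℕ => p * ((a₀ ^ 2 * q ^ m + c₁ * ((m : ℝ) * q ^ m))
        + c₂ * ((m : ℝ) * ((m : ℝ) - 1) * q ^ m)))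
      = fun m : ℕ => (p * q ^ m) * (a₀ ^ 2 + c₁ * (m : ℝ) + c₂ * ((m : ℝ) * ((m : ℝ) - 1))) := by
    funext m; ring
  rw [hfun2] at hbig
  have hT : p * ((a₀ ^ 2 * (1 - q)⁻¹ + c₁ * (q / (1 - q) ^ 2)) + c₂ * (2 * q ^ 2 / (1 - q) ^ 3))
      = a₀ ^ 2 + c₁ * μ + c₂ * (2 * μ ^ 2) := by
    rw [h1q, hq_eq]
    field_simp
  rw [hT] at hbig
  -- pointwise identity
  have hpt : ∀ ω, ∑' m, f m ω = (a₀ + μ⁻¹ * ∑ i ∈ Finset.range (M ω), X i ω) ^ 2 := by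
    intro ω
    rw [tsum_eq_single (M ω) (fun b hb => by
      simp only [hf_def]
      exact Set.indicator_of_notMem (by simp [Set.mem_setOf_eq, Ne.symm hb]) _)]
    simp only [hf_def]
    rw [Set.indicator_of_mem (by simp [Set.mem_setOf_eq]) _]
  -- summability bound
  have hlint : ∀ m : ℕ, ∫⁻ ω, ‖f m ω‖ₑ ∂P
      = ENNReal.ofReal ((p * q ^ m) * (a₀ ^ 2 + c₁ * (m : ℝ) + c₂ * ((m : ℝ) * ((m : ℝ) - 1)))) := by
    intro m
    rw [← hI m, ← hfI m,
      ofReal_integral_eq_lintegral_ofReal (hf_int m) (ae_of_all _ (hf_nonneg m))]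
    exact lintegral_congr fun ω => (Real.enorm_eq_ofReal (hf_nonneg m ω))
  have hterm_nonneg : ∀ m : ℕ,
      0 ≤ (p * q ^ m) * (a₀ ^ 2 + c₁ * (m : ℝ) + c₂ * ((m : ℝ) * ((m : ℝ) - 1))) := by
    intro m
    rw [← hI m, ← hfI m]
    exact integral_nonneg (hf_nonneg m)
  have hbound : ∑' m, ∫⁻ ω, ‖f m ω‖ₑ ∂P ≠ ⊤ := by
    simp_rw [hlint]
    rw [← ENNReal.ofReal_tsum_of_nonneg hterm_nonneg hbig.summable]
    exact ENNReal.ofReal_ne_top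
  -- conclusion
  have key : ∫ ω, (a₀ + μ⁻¹ * ∑ i ∈ Finset.range (M ω), X i ω) ^ 2 ∂P
      = ∑' m, ∫ ω, f m ω ∂P := by
    rw [← integral_tsum (fun m => (hf_meas m).aestronglyMeasurable) hbound]
    exact integral_congr_ae (ae_of_all _ fun ω => (hpt ω).symm)
  rw [key]
  have : (fun m : ℕ => ∫ ω, f m ω ∂P)
      = fun m : ℕ => (p * q ^ m) * (a₀ ^ 2 + c₁ * (m : ℝ) + c₂ * ((m : ℝ) * ((m : ℝ) - 1))) := by
    funext m; rw [hfI m, hI m]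
  rw [this, hbig.tsum_eq]

/-- Second moment of the multifidelity correction estimator with a geometric
number of high-fidelity simulations: with `(Wᵢ)` i.i.d. square-integrable and
`M` geometric on `ℕ` with success probability `p = 1/(1+μ)` (so `E[M] = μ`),
independent of the sequence, `S = a₀ + μ⁻¹ ∑_{i < M} (Wᵢ - a₀)` satisfies
`E[S²] = (E[W₀])² + E[(W₀ - a₀)²]/μ + (E[W₀] - a₀)²`. -/
theorem multifidelity_correction_second_moment_geometric
    {Ω : Type*} [MeasurableSpace Ω] {P : Measure Ω} [IsProbabilityMeasure P]
    (a₀ μ : ℝ) (hμ : 0 < μ)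
    (W : ℕ → Ω → ℝ) (hWm : ∀ i, Measurable (W i))
    (hindep : iIndepFun W P)
    (hident : ∀ i, IdentDistrib (W i) (W 0) P P)
    (hsq : ∀ i, MemLp (W i) 2 P)
    (M : Ω → ℕ) (hM : Measurable M)
    (hMindep : IndepFun M (fun ω i => W i ω) P)
    (hMdist : ∀ m : ℕ,
      P {ω | M ω = m} = ENNReal.ofReal
        ((1 / (1 + μ)) * (1 - 1 / (1 + μ)) ^ m)) :
    ∫ ω, (a₀ + μ⁻¹ * ∑ i ∈ Finset.range (M ω), (W i ω - a₀)) ^ 2 ∂P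
      = (∫ ω, W 0 ω ∂P) ^ 2 + (∫ ω, (W 0 ω - a₀) ^ 2 ∂P) / μ
        + ((∫ ω, W 0 ω ∂P) - a₀) ^ 2 := by
  have hμ0 : μ ≠ 0 := ne_of_gt hμ
  set X : ℕ → Ω → ℝ := fun i ω => W i ω - a₀ with hX_def
  have hXm : ∀ i, Measurable (X i) := fun i => (hWm i).sub measurable_const
  have hX2 : ∀ i, MemLp (X i) 2 P := fun i => (hsq i).sub (memLp_const a₀)
  have hXid : ∀ i, IdentDistrib (X i) (X 0) P P := fun i =>
    (hident i).comp (measurable_id.sub measurable_const)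
  have hpair : ∀ i j, i ≠ j → IndepFun (X i) (X j) P := fun i j hij =>
    (hindep.indepFun hij).comp (measurable_id.sub measurable_const)
      (measurable_id.sub measurable_const)
  have hindep2 : ∀ m : ℕ, IndepFun (fun ω => if M ω = m then (1 : ℝ) else 0)
      (fun ω => (a₀ + μ⁻¹ * ∑ i ∈ Finset.range m, X i ω) ^ 2) P := by
    intro m
    have hψ : Measurable (fun n : ℕ => if n = m then (1 : ℝ) else 0) :=
      Measurable.ite measurableSet_eq measurable_const measurable_const
    have hφ : Measurable
        (fun v : ℕ → ℝ => (a₀ + μ⁻¹ * ∑ i ∈ Finset.range m, (v i - a₀)) ^ 2) :=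
      (measurable_const.add ((Finset.measurable_sum _ fun i _ =>
        (measurable_pi_apply i).sub measurable_const).const_mul μ⁻¹)).pow_const 2
    exact hMindep.comp hψ hφ
  have hmain := aux_main a₀ μ hμ X hXm hX2 hpair hXid M hM hindep2 hMdist
  simp only [hX_def] at hmain
  rw [hmain]
  have he1 : ∫ ω, (W 0 ω - a₀) ∂P = (∫ ω, W 0 ω ∂P) - a₀ := by
    rw [integral_sub ((hsq 0).integrable one_le_two) (integrable_const _), integral_const]
    simp
  rw [he1]
  field_simp
  ring
end

section
/- Let ρ be a measure on a measurable space X, let c, g : X → ℝ be measurable with c(x) > 0 and g(x) > 0 for ρ-a.e. x, let A, B > 0 be reals, and suppose ∫ √(c·g) dρ < ∞. Define μ*(x) = √( (A · g(x)) / (B · c(x)) ). Then μ*·c and g/μ* are ρ-integrable and ( A + ∫ μ*·c dρ ) · ( B + ∫ g/μ* dρ ) = ( √(A·B) + ∫ √(c·g) dρ )². -/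
open MeasureTheory

/-- Attainment half of Lemma 2 (optimal mean function): the allocation
`μ*(x) = √(A g(x) / (B c(x)))` makes `μ*·c` and `g/μ*` integrable and
achieves the Cauchy–Schwarz lower bound
`(A + ∫ μ* c dρ)(B + ∫ g/μ* dρ) = (√(AB) + ∫ √(cg) dρ)²`. -/
theorem multifidelity_performance_attained
    {X : Type*} [MeasurableSpace X] (ρ : Measure X)
    (c g : X → ℝ) (hcm : Measurable c) (hgm : Measurable g)
    (hc : ∀ᵐ x ∂ρ, 0 < c x) (hg : ∀ᵐ x ∂ρ, 0 < g x)
    (A B : ℝ) (hA : 0 < A) (hB : 0 < B)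
    (hint : Integrable (fun x => Real.sqrt (c x * g x)) ρ) :
    Integrable (fun x => Real.sqrt (A * g x / (B * c x)) * c x) ρ ∧
    Integrable (fun x => g x / Real.sqrt (A * g x / (B * c x))) ρ ∧
    (A + ∫ x, Real.sqrt (A * g x / (B * c x)) * c x ∂ρ) *
      (B + ∫ x, g x / Real.sqrt (A * g x / (B * c x)) ∂ρ)
      = (Real.sqrt (A * B) + ∫ x, Real.sqrt (c x * g x) ∂ρ) ^ 2 := by
  have sA := Real.sqrt_pos.mpr hA
  have sB := Real.sqrt_pos.mpr hB
  have h1 : (fun x => Real.sqrt (A * g x / (B * c x)) * c x)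
      =ᵐ[ρ] fun x => Real.sqrt A / Real.sqrt B * Real.sqrt (c x * g x) := by
    filter_upwards [hc, hg] with x hcx hgx
    have hcx' := hcx.le
    have hgx' := hgx.le
    rw [Real.sqrt_div' _ (by positivity), Real.sqrt_mul hA.le, Real.sqrt_mul hB.le,
      Real.sqrt_mul hcx']
    have hsc : Real.sqrt (c x) > 0 := Real.sqrt_pos.mpr hcx
    have hc2 : c x = Real.sqrt (c x) * Real.sqrt (c x) := (Real.mul_self_sqrt hcx').symm
    field_simp
    linear_combination hc2
  have h2 : (fun x => g x / Real.sqrt (A * g x / (B * c x)))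
      =ᵐ[ρ] fun x => Real.sqrt B / Real.sqrt A * Real.sqrt (c x * g x) := by
    filter_upwards [hc, hg] with x hcx hgx
    have hcx' := hcx.le
    have hgx' := hgx.le
    rw [Real.sqrt_div' _ (by positivity), Real.sqrt_mul hA.le, Real.sqrt_mul hB.le,
      Real.sqrt_mul hcx']
    have hsc : Real.sqrt (c x) > 0 := Real.sqrt_pos.mpr hcx
    have hsg : Real.sqrt (g x) > 0 := Real.sqrt_pos.mpr hgx
    have hg2 : g x = Real.sqrt (g x) * Real.sqrt (g x) := (Real.mul_self_sqrt hgx').symm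
    field_simp
    linear_combination hg2
  have i1 : Integrable (fun x => Real.sqrt (A * g x / (B * c x)) * c x) ρ :=
    ((hint.const_mul (Real.sqrt A / Real.sqrt B)).congr h1.symm)
  have i2 : Integrable (fun x => g x / Real.sqrt (A * g x / (B * c x))) ρ :=
    ((hint.const_mul (Real.sqrt B / Real.sqrt A)).congr h2.symm)
  refine ⟨i1, i2, ?_⟩
  rw [integral_congr_ae h1, integral_congr_ae h2, integral_const_mul, integral_const_mul]
  set I := ∫ x, Real.sqrt (c x * g x) ∂ρ
  have hAB : Real.sqrt (A * B) = Real.sqrt A * Real.sqrt B := Real.sqrt_mul hA.le _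
  have hA2 : Real.sqrt A * Real.sqrt A = A := Real.mul_self_sqrt hA.le
  have hB2 : Real.sqrt B * Real.sqrt B = B := Real.mul_self_sqrt hB.le
  rw [hAB]
  set a := Real.sqrt A with ha
  set b := Real.sqrt B with hb
  rw [← hA2, ← hB2]
  field_simp
end

section
/- Let ρ be a measure on a measurable space X, let c, g : X → ℝ be measurable with c(x) > 0 and g(x) > 0 for ρ-a.e. x, let A, B, K > 0 be reals, and suppose ∫ √(c·g) dρ < ∞. Then the following are equivalent: (i) there exists a measurable function μ : X → ℝ with μ > 0 ρ-a.e., with μ·c and g/μ ρ-integrable, such that ( A + ∫ μ·c dρ ) · ( B + ∫ g/μ dρ ) < K; (ii) √(A·B) + ∫ √(c·g) dρ < √K. -/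
open MeasureTheory

/-- Two-point Cauchy–Schwarz: `√(ab) + √(uv) ≤ √((a+u)(b+v))`. -/
lemma sqrt_mul_add_sqrt_mul_le {a b u v : ℝ} (ha : 0 ≤ a) (hb : 0 ≤ b)
    (hu : 0 ≤ u) (hv : 0 ≤ v) :
    Real.sqrt (a * b) + Real.sqrt (u * v) ≤ Real.sqrt ((a + u) * (b + v)) := by
  set sa := Real.sqrt a
  set sb := Real.sqrt b
  set su := Real.sqrt u
  set sv := Real.sqrt v
  have hsa : sa ^ 2 = a := Real.sq_sqrt ha
  have hsb : sb ^ 2 = b := Real.sq_sqrt hb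
  have hsu : su ^ 2 = u := Real.sq_sqrt hu
  have hsv : sv ^ 2 = v := Real.sq_sqrt hv
  have h1 : Real.sqrt (a * b) = sa * sb := Real.sqrt_mul ha b
  have h2 : Real.sqrt (u * v) = su * sv := Real.sqrt_mul hu v
  rw [h1, h2]
  rw [Real.le_sqrt (by positivity) (by positivity)]
  nlinarith [sq_nonneg (sa * sv - su * sb), Real.sqrt_nonneg a, Real.sqrt_nonneg b,
    Real.sqrt_nonneg u, Real.sqrt_nonneg v]

/-- From the family of AM–GM bounds `2S ≤ tP + Q/t` we get `S ≤ √(PQ)`. -/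
lemma le_sqrt_of_forall_amgm {S P Q : ℝ} (hS : 0 ≤ S) (hP : 0 ≤ P) (hQ : 0 ≤ Q)
    (h : ∀ t : ℝ, 0 < t → 2 * S ≤ t * P + Q / t) : S ≤ Real.sqrt (P * Q) := by
  rcases eq_or_lt_of_le hS with hS0 | hS0
  · rw [← hS0]; exact Real.sqrt_nonneg _
  rcases eq_or_lt_of_le hP with hP0 | hP0
  · -- P = 0 : pick t large, contradiction with S > 0
    exfalso
    have ht : (0:ℝ) < (Q + 1) / (2 * S) := by positivity
    have := h _ ht
    rw [← hP0] at this
    have hQt : Q / ((Q + 1) / (2 * S)) = 2 * S * Q / (Q + 1) := by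
      field_simp
    rw [hQt] at this
    have hd : 2 * S * Q / (Q + 1) < 2 * S := by
      rw [div_lt_iff₀ (by positivity)]
      nlinarith
    nlinarith
  · have := h (S / P) (by positivity)
    have hq : Q / (S / P) = Q * P / S := by
      field_simp
    rw [hq, div_mul_cancel₀ _ (ne_of_gt hP0)] at this
    rw [Real.le_sqrt hS (by positivity)]
    have h2 : S ≤ Q * P / S := by linarith
    rw [le_div_iff₀ hS0] at h2
    nlinarith

/-- Corollary 2 (existence of an improving multifidelity allocation): there is
a positive measurable allocation `μ` with `μ·c` and `g/μ` integrable and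
`(A + ∫ μ c dρ)(B + ∫ g/μ dρ) < K` if and only if
`√(AB) + ∫ √(cg) dρ < √K`. -/
theorem multifidelity_improvement_iff
    {X : Type*} [MeasurableSpace X] (ρ : Measure X)
    (c g : X → ℝ) (hcm : Measurable c) (hgm : Measurable g)
    (hc : ∀ᵐ x ∂ρ, 0 < c x) (hg : ∀ᵐ x ∂ρ, 0 < g x)
    (A B K : ℝ) (hA : 0 < A) (hB : 0 < B) (hK : 0 < K)
    (hint : Integrable (fun x => Real.sqrt (c x * g x)) ρ) :
    (∃ μ : X → ℝ, Measurable μ ∧ (∀ᵐ x ∂ρ, 0 < μ x) ∧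
        Integrable (fun x => μ x * c x) ρ ∧
        Integrable (fun x => g x / μ x) ρ ∧
        (A + ∫ x, μ x * c x ∂ρ) * (B + ∫ x, g x / μ x ∂ρ) < K)
      ↔ Real.sqrt (A * B) + ∫ x, Real.sqrt (c x * g x) ∂ρ < Real.sqrt K := by
  set S := ∫ x, Real.sqrt (c x * g x) ∂ρ with hSdef
  have hSnn : 0 ≤ S := integral_nonneg fun x => Real.sqrt_nonneg _
  constructor
  · -- forward direction
    rintro ⟨μ, hμm, hμpos, hi1, hi2, hlt⟩
    set P := ∫ x, μ x * c x ∂ρ with hPdef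
    set Q := ∫ x, g x / μ x ∂ρ with hQdef
    have hPnn : 0 ≤ P := integral_nonneg_of_ae <| by
      filter_upwards [hc, hμpos] with x h1 h2
      exact le_of_lt (mul_pos h2 h1)
    have hQnn : 0 ≤ Q := integral_nonneg_of_ae <| by
      filter_upwards [hg, hμpos] with x h1 h2
      exact le_of_lt (div_pos h1 h2)
    -- Cauchy–Schwarz via AM–GM family
    have hCS : S ≤ Real.sqrt (P * Q) := by
      apply le_sqrt_of_forall_amgm hSnn hPnn hQnn
      intro t ht
      have hptw : ∀ᵐ x ∂ρ, 2 * Real.sqrt (c x * g x)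
          ≤ t * (μ x * c x) + (g x / μ x) / t := by
        filter_upwards [hc, hg, hμpos] with x h1 h2 h3
        have hab : (t * (μ x * c x)) * ((g x / μ x) / t) = c x * g x := by
          field_simp
        have ha : 0 ≤ t * (μ x * c x) := by positivity
        have hb : 0 ≤ (g x / μ x) / t := by positivity
        have hs : Real.sqrt (c x * g x)
            = Real.sqrt (t * (μ x * c x)) * Real.sqrt ((g x / μ x) / t) := by
          rw [← Real.sqrt_mul ha, hab]
        rw [hs]
        nlinarith [sq_nonneg (Real.sqrt (t * (μ x * c x)) - Real.sqrt ((g x / μ x) / t)),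
          Real.sq_sqrt ha, Real.sq_sqrt hb, Real.sqrt_nonneg (t * (μ x * c x)),
          Real.sqrt_nonneg ((g x / μ x) / t)]
      have hI : Integrable (fun x => t * (μ x * c x) + (g x / μ x) / t) ρ :=
        (hi1.const_mul t).add (hi2.div_const t)
      calc 2 * S = ∫ x, 2 * Real.sqrt (c x * g x) ∂ρ := (integral_const_mul 2 _).symm
        _ ≤ ∫ x, t * (μ x * c x) + (g x / μ x) / t ∂ρ :=
            integral_mono_ae (hint.const_mul 2) hI hptw
        _ = t * P + Q / t := by
            rw [integral_add (hi1.const_mul t) (hi2.div_const t), integral_const_mul,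
              integral_div]
    have h1 : Real.sqrt (A * B) + S ≤ Real.sqrt ((A + P) * (B + Q)) :=
      le_trans (by linarith [sqrt_mul_add_sqrt_mul_le hA.le hB.le hPnn hQnn]) le_rfl
    have h2 : Real.sqrt ((A + P) * (B + Q)) < Real.sqrt K :=
      Real.sqrt_lt_sqrt (by positivity) hlt
    linarith
  · -- backward direction
    intro h
    set t := Real.sqrt (A / B) with htdef
    have ht : 0 < t := Real.sqrt_pos.mpr (by positivity)
    refine ⟨fun x => t * Real.sqrt (g x / c x),
      (measurable_const.mul (hgm.div hcm).sqrt), ?_, ?_, ?_, ?_⟩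
    · filter_upwards [hc, hg] with x h1 h2
      have : 0 < g x / c x := div_pos h2 h1
      positivity
    all_goals {
      have hμc : (fun x => (t * Real.sqrt (g x / c x)) * c x)
          =ᵐ[ρ] fun x => t * Real.sqrt (c x * g x) := by
        filter_upwards [hc, hg] with x h1 h2
        have : Real.sqrt (g x / c x) * c x = Real.sqrt (c x * g x) := by
          rw [← Real.sqrt_mul_self h1.le]
          rw [← Real.sqrt_mul (by positivity) (c x * c x)]
          congr 1
          field_simp
          rw [Real.sq_sqrt (by positivity)]
        simp only [mul_assoc, this]
      have hgμ : (fun x => g x / (t * Real.sqrt (g x / c x)))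
          =ᵐ[ρ] fun x => t⁻¹ * Real.sqrt (c x * g x) := by
        filter_upwards [hc, hg] with x h1 h2
        have hgc : 0 < g x / c x := div_pos h2 h1
        have hs : 0 < Real.sqrt (g x / c x) := Real.sqrt_pos.mpr hgc
        have : g x / Real.sqrt (g x / c x) = Real.sqrt (c x * g x) := by
          rw [div_eq_iff (ne_of_gt hs), ← Real.sqrt_mul (by positivity)]
          rw [show c x * g x * (g x / c x) = g x * g x by field_simp]
          exact (Real.sqrt_mul_self h2.le).symm
        rw [← this]
        field_simp
      first
      | exact (hint.const_mul t).congr hμc.symm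
      | exact (hint.const_mul t⁻¹).congr hgμ.symm
      | { rw [integral_congr_ae hμc, integral_congr_ae hgμ, integral_const_mul,
            integral_const_mul, ← hSdef]
          -- now show (A + t * S) * (B + t⁻¹ * S) < K
          set sa := Real.sqrt A with hsadef
          set sb := Real.sqrt B with hsbdef
          have hsa : sa ^ 2 = A := Real.sq_sqrt hA.le
          have hsb : sb ^ 2 = B := Real.sq_sqrt hB.le
          have hsa0 : 0 < sa := Real.sqrt_pos.mpr hA
          have hsb0 : 0 < sb := Real.sqrt_pos.mpr hB
          have htv : t = sa / sb := by rw [htdef, Real.sqrt_div hA.le]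
          have hAB : Real.sqrt (A * B) = sa * sb := Real.sqrt_mul hA.le B
          have hkey : (A + t * S) * (B + t⁻¹ * S) = (sa * sb + S) ^ 2 := by
            rw [htv, ← hsa, ← hsb]
            field_simp
          rw [hkey]
          have hlt : sa * sb + S < Real.sqrt K := by rw [← hAB]; exact h
          have hk : Real.sqrt K * Real.sqrt K = K := Real.mul_self_sqrt hK.le
          nlinarith [hlt, hk, hSnn, mul_nonneg hsa0.le hsb0.le, Real.sqrt_nonneg K] }
    }
end

section
/- Let ι be a finite type, let c, V : ι → ℝ with c_k > 0 and V_k > 0 for all k, and let A, B > 0 be reals. Then a vector ν : ι → ℝ with ν_k > 0 for all k satisfies the stationarity conditions ν_k² · c_k · ( B + Σ_{j} V_j / ν_j ) = V_k · ( A + Σ_{j} c_j ν_j ) for every k if and only if ν_k = √( (A · V_k) / (B · c_k) ) for every k. -/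
/-- The optimal piecewise-constant allocation `ν*` is the unique positive
stationary point of the performance function `J_D`: a positive vector `ν`
satisfies `ν_k² c_k (B + ∑_j V_j/ν_j) = V_k (A + ∑_j c_j ν_j)` for all `k`
if and only if `ν_k = √(A V_k / (B c_k))` for all `k`. -/
theorem piecewise_performance_stationary_iff
    {ι : Type*} [Fintype ι] (c V : ι → ℝ)
    (hc : ∀ k, 0 < c k) (hV : ∀ k, 0 < V k)
    (A B : ℝ) (hA : 0 < A) (hB : 0 < B)
    (ν : ι → ℝ) (hν : ∀ k, 0 < ν k) :
    (∀ k, ν k ^ 2 * c k * (B + ∑ j, V j / ν j)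
        = V k * (A + ∑ j, c j * ν j))
      ↔ ∀ k, ν k = Real.sqrt (A * V k / (B * c k)) := by
  set S : ℝ := B + ∑ j, V j / ν j with hSdef
  set T : ℝ := A + ∑ j, c j * ν j with hTdef
  have hSpos : 0 < S := by
    have h0 : (0:ℝ) ≤ ∑ j, V j / ν j :=
      Finset.sum_nonneg fun j _ => le_of_lt (div_pos (hV j) (hν j))
    rw [hSdef]; linarith
  constructor
  · intro h k
    -- key: c j * ν j = (T/S) * (V j / ν j), summed gives A*S = T*B
    have key : ∀ j, c j * ν j * S = T * (V j / ν j) := by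
      intro j
      have hj := h j
      have hνj := (hν j).ne'
      field_simp
      linear_combination h j
    have hsum : (∑ j, c j * ν j) * S = T * ∑ j, V j / ν j := by
      rw [Finset.sum_mul, Finset.mul_sum]
      exact Finset.sum_congr rfl fun j _ => key j
    have hAS : A * S = T * B := by
      have h1 : (T - A) * S = T * (S - B) := by
        rw [hSdef, hTdef]; ring_nf
        rw [hSdef, hTdef] at hsum
        simp only [div_eq_mul_inv] at hsum ⊢
        linear_combination hsum
      linear_combination -h1
    have hsq' : ν k ^ 2 * (B * c k) * S = A * V k * S := by
      linear_combination B * h k - V k * hAS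
    have hsq : ν k ^ 2 * (B * c k) = A * V k :=
      mul_right_cancel₀ hSpos.ne' hsq'
    have : ν k ^ 2 = A * V k / (B * c k) :=
      (eq_div_iff (mul_pos hB (hc k)).ne').mpr hsq
    rw [← this, Real.sqrt_sq (hν k).le]
  · intro h k
    have hsq : ∀ j, ν j ^ 2 * (B * c j) = A * V j := by
      intro j
      have : ν j ^ 2 = A * V j / (B * c j) := by
        rw [h j]
        exact Real.sq_sqrt
          (div_nonneg (mul_pos hA (hV j)).le (mul_pos hB (hc j)).le)
      exact (eq_div_iff (mul_pos hB (hc j)).ne').mp this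
    have hrel : ∀ j, V j / ν j = B * c j * ν j / A := by
      intro j
      rw [div_eq_div_iff (hν j).ne' hA.ne']
      linear_combination -hsq j
    have hST : A * S = B * T := by
      have hs : ∑ j, V j / ν j = (∑ j, B * c j * ν j) / A := by
        rw [Finset.sum_div]
        exact Finset.sum_congr rfl fun j _ => hrel j
      have hs2 : ∑ j, B * c j * ν j = B * ∑ j, c j * ν j := by
        rw [Finset.mul_sum]; exact Finset.sum_congr rfl fun j _ => by ring
      rw [hSdef, hTdef, hs, hs2]
      field_simp
    have hGoal : B * (ν k ^ 2 * c k * S) = B * (V k * T) := by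
      linear_combination S * hsq k + V k * hST
    exact mul_left_cancel₀ hB.ne' hGoal
end
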